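/- Let N be a finitely generated module over a Noetherian commutative ring R. The function on Spec R sending a prime p to dim_{k(p)} N ⊗_R k(p) (the minimal number of generators of N_p) is upper semicontinuous: for every integer m, the set {p ∈ Spec R : dim_{k(p)} N ⊗_R k(p) < m} is open. -/

import Mathlib

open TensorProduct

/-- The residue field `k(p)` of a prime `p` of `R`. -/
noncomputable abbrev residueFieldAt {R : Type*} [CommRing R] (p : PrimeSpectrum R) :=
  IsLocalRing.ResidueField (Localization.AtPrime p.asIdeal)

lemma aux_subsingleton_tensor_iff {R : Type*} [CommRing R] (M : Type*) [AddCommGroup M]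
    [Module R M] [Module.Finite R M] (p : PrimeSpectrum R) :
    Subsingleton (residueFieldAt p ⊗[R] M) ↔ p ∉ Module.support R M := by
  let Rp := Localization.AtPrime p.asIdeal
  have : IsLocalizedModule p.asIdeal.primeCompl (TensorProduct.mk R Rp M 1) :=
    (isLocalizedModule_iff_isBaseChange p.asIdeal.primeCompl Rp _).mpr
      (TensorProduct.isBaseChange R M Rp)
  have e1 : LocalizedModule p.asIdeal.primeCompl M ≃ₗ[R] Rp ⊗[R] M :=
    IsLocalizedModule.iso p.asIdeal.primeCompl (TensorProduct.mk R Rp M 1)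
  have e2 : residueFieldAt p ⊗[R] M ≃ₗ[residueFieldAt p]
      residueFieldAt p ⊗[Rp] (Rp ⊗[R] M) :=
    (AlgebraTensorModule.cancelBaseChange R Rp (residueFieldAt p) (residueFieldAt p) M).symm
  rw [Module.notMem_support_iff, e2.toEquiv.subsingleton_congr,
    IsLocalRing.subsingleton_tensorProduct (R := Rp), ← e1.toEquiv.subsingleton_congr]

lemma aux_finrank_le {R N : Type*} [CommRing R] [AddCommGroup N] [Module R N]
    (q : PrimeSpectrum R) {n : ℕ} (f : Fin n → N)
    (h : Subsingleton (residueFieldAt q ⊗[R] (N ⧸ Submodule.span R (Set.range f)))) :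
    Module.finrank (residueFieldAt q) (residueFieldAt q ⊗[R] N) ≤ n := by
  classical
  set k := residueFieldAt q
  set S := Submodule.span R (Set.range f) with hS
  have hspan : Submodule.span k (Set.range fun i => (1 : k) ⊗ₜ[R] f i) = ⊤ := by
    rw [eq_top_iff]
    rintro x -
    have hx : LinearMap.lTensor k S.mkQ x = 0 := Subsingleton.elim _ _
    have hex := lTensor_exact k (LinearMap.exact_subtype_mkQ S) (Submodule.mkQ_surjective S)
    obtain ⟨y, rfl⟩ := (hex x).mp hx
    clear hx hex
    induction y using TensorProduct.induction_on with
    | zero => simp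
    | add a b ha hb => rw [map_add]; exact add_mem ha hb
    | tmul a z =>
      obtain ⟨z, hz⟩ := z
      simp only [LinearMap.lTensor_tmul, Submodule.coe_subtype]
      induction hz using Submodule.span_induction with
      | mem w hw =>
        obtain ⟨i, rfl⟩ := hw
        have : a ⊗ₜ[R] f i = a • ((1 : k) ⊗ₜ[R] f i) := by
          rw [smul_tmul', smul_eq_mul, mul_one]
        rw [this]
        exact Submodule.smul_mem _ a (Submodule.subset_span ⟨i, rfl⟩)
      | zero => simp
      | add w₁ w₂ _ _ h₁ h₂ => rw [tmul_add]; exact add_mem h₁ h₂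
      | smul r w _ hw =>
        rw [tmul_smul, ← algebraMap_smul k r]
        exact Submodule.smul_mem _ _ hw
  have hcard : (Set.range fun i => (1 : k) ⊗ₜ[R] f i).toFinset.card ≤ n := by
    rw [Set.toFinset_range]
    exact (Finset.card_image_le).trans (by simp)
  calc Module.finrank k (k ⊗[R] N)
      = Module.finrank k (⊤ : Submodule k (k ⊗[R] N)) := (finrank_top k _).symm
    _ = Module.finrank k (Submodule.span k (Set.range fun i => (1 : k) ⊗ₜ[R] f i)) := by
        rw [hspan]
    _ ≤ n := (finrank_span_le_card _).trans hcard

/-- For a finitely generated module `N` over a Noetherian ring `R`, the function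
`p ↦ dim_{k(p)} N ⊗_R k(p)` (the minimal number of generators of `N_p`) is upper
semicontinuous on `Spec R`. -/
theorem minimal_generators_upper_semicontinuous
    (R N : Type*) [CommRing R] [IsNoetherianRing R]
    [AddCommGroup N] [Module R N] [Module.Finite R N] (m : ℕ) :
    IsOpen {p : PrimeSpectrum R |
      Module.finrank (residueFieldAt p) (residueFieldAt p ⊗[R] N) < m} := by
  classical
  rw [isOpen_iff_forall_mem_open]
  intro p hp
  simp only [Set.mem_setOf_eq] at hp
  set k := residueFieldAt p with hk
  haveI : Module.Finite k (k ⊗[R] N) := inferInstance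
  set n := Module.finrank k (k ⊗[R] N) with hn
  -- The simple tensors `1 ⊗ x` span `k ⊗ N` over `k`.
  have hs : Submodule.span k (Set.range fun x : N => (1 : k) ⊗ₜ[R] x) = ⊤ := by
    have h1 : Submodule.span R {t : k ⊗[R] N | ∃ a x, a ⊗ₜ x = t} ≤
        (Submodule.span k (Set.range fun x : N => (1 : k) ⊗ₜ[R] x)).restrictScalars R := by
      rw [Submodule.span_le]
      rintro _ ⟨a, x, rfl⟩
      have : a ⊗ₜ[R] x = a • ((1 : k) ⊗ₜ[R] x) := by
        rw [smul_tmul', smul_eq_mul, mul_one]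
      rw [SetLike.mem_coe, Submodule.restrictScalars_mem, this]
      exact Submodule.smul_mem _ a (Submodule.subset_span ⟨x, rfl⟩)
    rw [eq_top_iff]
    intro y _
    exact h1 (by rw [TensorProduct.span_tmul_eq_top R k N]; trivial)
  -- extract a basis from this spanning set
  obtain ⟨b, hbs, hbspan, hbli⟩ :=
    exists_linearIndependent k (Set.range fun x : N => (1 : k) ⊗ₜ[R] x)
  rw [hs] at hbspan
  have hbasis : Module.Basis b k (k ⊗[R] N) := Module.Basis.mk hbli (by rw [Subtype.range_coe, hbspan])
  haveI : Fintype b := (Set.Finite.fintype (Module.Finite.finite_basis hbasis))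
  have hcardb : Fintype.card b = n := (Module.finrank_eq_card_basis hbasis).symm
  let e : Fin n ≃ b := (Fintype.equivFinOfCardEq hcardb).symm
  -- choose preimages in N
  have hpre : ∀ i : Fin n, ∃ x : N, (1 : k) ⊗ₜ[R] x = (e i : k ⊗[R] N) := fun i => hbs (e i).2
  choose f hf using hpre
  set S := Submodule.span R (Set.range f) with hSdef
  set Q := N ⧸ S with hQdef
  haveI : Module.Finite R Q := Module.Finite.quotient R _
  -- `k ⊗ Q` is trivial
  have hQ0 : Subsingleton (k ⊗[R] Q) := by
    have hrange : Set.range (fun i : Fin n => (1 : k) ⊗ₜ[R] f i) = b := by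
      ext y
      constructor
      · rintro ⟨i, rfl⟩; simpa only [hf] using (e i).2
      · intro hy
        exact ⟨e.symm ⟨y, hy⟩, by simp only [hf, Equiv.apply_symm_apply]⟩
    refine subsingleton_of_forall_eq 0 fun y => ?_
    obtain ⟨x, rfl⟩ := LinearMap.lTensor_surjective k (Submodule.mkQ_surjective S) y
    have hx : x ∈ Submodule.span k (Set.range fun i : Fin n => (1 : k) ⊗ₜ[R] f i) := by
      rw [hrange, hbspan]; trivial
    have hmap : ∀ z ∈ Submodule.span k (Set.range fun i : Fin n => (1 : k) ⊗ₜ[R] f i),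
        LinearMap.baseChange k S.mkQ z = 0 := by
      intro z hz
      induction hz using Submodule.span_induction with
      | mem w hw =>
        obtain ⟨i, rfl⟩ := hw
        have hfi : S.mkQ (f i) = 0 := by
          rw [Submodule.mkQ_apply, Submodule.Quotient.mk_eq_zero]
          exact Submodule.subset_span ⟨i, rfl⟩
        simp [hfi]
      | zero => simp
      | add w₁ w₂ _ _ h₁ h₂ => rw [map_add, h₁, h₂, add_zero]
      | smul c w _ hw => rw [map_smul, hw, smul_zero]
    have := hmap x hx
    rwa [LinearMap.baseChange_eq_ltensor] at this
  -- the open neighbourhood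
  refine ⟨(Module.support R Q)ᶜ, ?_, ?_, ?_⟩
  · intro q hq
    simp only [Set.mem_compl_iff] at hq
    have hsub : Subsingleton (residueFieldAt q ⊗[R] Q) :=
      (aux_subsingleton_tensor_iff Q q).mpr hq
    have := aux_finrank_le q f hsub
    exact Set.mem_setOf_eq ▸ lt_of_le_of_lt this hp
  · rw [Module.support_eq_zeroLocus]
    exact (PrimeSpectrum.isClosed_zeroLocus _).isOpen_compl
  · exact Set.mem_compl ((aux_subsingleton_tensor_iff Q p).mp hQ0)
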